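/- The bracket of two vector fields on G × G of the form X(g,h) = (x₁(h), y₁(g)) and Y(g,h) = (x₂(h), y₂(g)), where x₁, x₂, y₁, y₂ : G → 𝔤 satisfy Ad(k)(xᵢ(k)) = xᵢ(k) and Ad(k)(yᵢ(k)) = yᵢ(k) for all k, is given (using left trivialization) by [X,Y]|_(g,h) = ( dx₂|_h(y₁(g)|_h) − dx₁|_h(y₂(g)|_h), dy₂|_g(x₁(h)|_g) − dy₁|_g(x₂(h)|_g) ); in particular the pointwise bracket term ([x₁(h),x₂(h)], [y₁(g),y₂(g)]) vanishes when g and h are regular elements. -/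
import Mathlib


attribute [local instance] Matrix.normedAddCommGroup Matrix.normedSpace

open Matrix

abbrev SL2R := Matrix.SpecialLinearGroup (Fin 2) ℝ

lemma key_comm (k a b : Matrix (Fin 2) (Fin 2) ℝ) (hdet : k.det = 1)
    (htr2 : k.trace ≠ 2) (htr2' : k.trace ≠ -2)
    (hta : a.trace = 0) (htb : b.trace = 0)
    (hka : k * a = a * k) (hkb : k * b = b * k) : a * b = b * a := by
  set p := k 0 0; set q := k 0 1; set r := k 1 0; set s := k 1 1
  have hdet' : p * s - q * r = 1 := by rw [Matrix.det_fin_two] at hdet; linarith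
  have htra : a 0 0 + a 1 1 = 0 := by rw [Matrix.trace_fin_two] at hta; linarith
  have htrb : b 0 0 + b 1 1 = 0 := by rw [Matrix.trace_fin_two] at htb; linarith
  have ht2 : p + s ≠ 2 := by rwa [Matrix.trace_fin_two] at htr2
  have ht2' : p + s ≠ -2 := by rwa [Matrix.trace_fin_two] at htr2'
  have ea00 := congrFun (congrFun hka 0) 0
  have ea01 := congrFun (congrFun hka 0) 1
  have ea10 := congrFun (congrFun hka 1) 0
  have eb00 := congrFun (congrFun hkb 0) 0
  have eb01 := congrFun (congrFun hkb 0) 1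
  have eb10 := congrFun (congrFun hkb 1) 0
  simp only [Matrix.mul_apply, Fin.sum_univ_two] at ea00 ea01 ea10 eb00 eb01 eb10
  -- derived equations
  have A1 : q * a 1 0 = a 0 1 * r := by linarith
  have A2 : a 0 1 * (p - s) = 2 * a 0 0 * q := by linear_combination ea01 - q * htra
  have A3 : a 1 0 * (p - s) = 2 * a 0 0 * r := by linear_combination -ea10 - r * htra
  have B1 : q * b 1 0 = b 0 1 * r := by linarith
  have B2 : b 0 1 * (p - s) = 2 * b 0 0 * q := by linear_combination eb01 - q * htrb
  have B3 : b 1 0 * (p - s) = 2 * b 0 0 * r := by linear_combination -eb10 - r * htrb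
  set E := a 0 1 * b 1 0 - a 1 0 * b 0 1 with hE
  set F := a 0 0 * b 0 1 - a 0 1 * b 0 0 with hF
  set G := a 1 0 * b 0 0 - a 0 0 * b 1 0 with hG
  have hpsE : (p - s) * E = 0 := by
    linear_combination b 1 0 * A2 - b 0 1 * A3 + 2 * a 0 0 * B1
  have nz : p - s ≠ 0 ∨ q ≠ 0 ∨ r ≠ 0 := by
    by_contra hc
    push_neg at hc
    obtain ⟨h1, h2, h3⟩ := hc
    have hs : s = p := by linarith
    have hpp : p * p = 1 := by rw [hs, h2, h3] at hdet'; linarith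
    rcases mul_self_eq_one_iff.mp hpp with hp | hp
    · exact ht2 (by rw [hs, hp]; norm_num)
    · exact ht2' (by rw [hs, hp]; norm_num)
  have hE0 : E = 0 := by
    rcases nz with hne | hne | hne
    · exact (mul_eq_zero.mp hpsE).resolve_left hne
    · have hq : q * E = 0 := by linear_combination a 0 1 * B1 - b 0 1 * A1
      exact (mul_eq_zero.mp hq).resolve_left hne
    · have hr : r * E = 0 := by linear_combination a 1 0 * B1 - b 1 0 * A1
      exact (mul_eq_zero.mp hr).resolve_left hne
  have hF0 : F = 0 := by
    rcases nz with hne | hne | hne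
    · have hp : (p - s) * F = 0 := by linear_combination a 0 0 * B2 - b 0 0 * A2
      exact (mul_eq_zero.mp hp).resolve_left hne
    · have hq : q * F = 0 := by
        linear_combination (a 0 1 / 2) * B2 - (b 0 1 / 2) * A2
      exact (mul_eq_zero.mp hq).resolve_left hne
    · have hr : r * F = 0 := by
        linear_combination (a 0 1 / 2) * B3 - (b 0 1 / 2) * A3 - (1/2) * hpsE
      exact (mul_eq_zero.mp hr).resolve_left hne
  have hG0 : G = 0 := by
    rcases nz with hne | hne | hne
    · have hp : (p - s) * G = 0 := by linear_combination b 0 0 * A3 - a 0 0 * B3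
      exact (mul_eq_zero.mp hp).resolve_left hne
    · have hq : q * G = 0 := by
        linear_combination b 0 0 * A1 - (a 0 1 / 2) * B3 + (b 1 0 / 2) * A2
      exact (mul_eq_zero.mp hq).resolve_left hne
    · have hr : r * G = 0 := by
        linear_combination (b 1 0 / 2) * A3 - (a 1 0 / 2) * B3
      exact (mul_eq_zero.mp hr).resolve_left hne
  ext i j
  fin_cases i <;> fin_cases j <;>
    simp only [Matrix.mul_apply, Fin.sum_univ_two, Fin.mk_zero, Fin.mk_one, Fin.isValue] <;>
    [linear_combination hE0;
     linear_combination 2 * hF0 + a 0 1 * htrb - b 0 1 * htra;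
     linear_combination 2 * hG0 + b 1 0 * htra - a 1 0 * htrb;
     linear_combination -hE0]

/-- The bracket of two vector fields (x₁(h), y₁(g)) and (x₂(h), y₂(g)) on G × G in left
trivialization: the pointwise bracket term vanishes at regular (g,h), so the bracket
equals (dx₂(y₁) − dx₁(y₂), dy₂(x₁) − dy₁(x₂)). -/
theorem stmt18 (x₁ x₂ y₁ y₂ : Matrix (Fin 2) (Fin 2) ℝ → Matrix (Fin 2) (Fin 2) ℝ)
    (hx₁ : ∀ k : SL2R, Matrix.trace (x₁ k) = 0 ∧
      (k : Matrix (Fin 2) (Fin 2) ℝ) * x₁ k * (k : Matrix (Fin 2) (Fin 2) ℝ)⁻¹ = x₁ k)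
    (hx₂ : ∀ k : SL2R, Matrix.trace (x₂ k) = 0 ∧
      (k : Matrix (Fin 2) (Fin 2) ℝ) * x₂ k * (k : Matrix (Fin 2) (Fin 2) ℝ)⁻¹ = x₂ k)
    (hy₁ : ∀ k : SL2R, Matrix.trace (y₁ k) = 0 ∧
      (k : Matrix (Fin 2) (Fin 2) ℝ) * y₁ k * (k : Matrix (Fin 2) (Fin 2) ℝ)⁻¹ = y₁ k)
    (hy₂ : ∀ k : SL2R, Matrix.trace (y₂ k) = 0 ∧
      (k : Matrix (Fin 2) (Fin 2) ℝ) * y₂ k * (k : Matrix (Fin 2) (Fin 2) ℝ)⁻¹ = y₂ k)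
    (g h : SL2R)
    (hreg_g : Matrix.trace (g : Matrix (Fin 2) (Fin 2) ℝ) ≠ 2 ∧
      Matrix.trace (g : Matrix (Fin 2) (Fin 2) ℝ) ≠ -2)
    (hreg_h : Matrix.trace (h : Matrix (Fin 2) (Fin 2) ℝ) ≠ 2 ∧
      Matrix.trace (h : Matrix (Fin 2) (Fin 2) ℝ) ≠ -2) :
    (fderiv ℝ x₂ (h : Matrix (Fin 2) (Fin 2) ℝ) ((h : Matrix (Fin 2) (Fin 2) ℝ) * y₁ g) -
        fderiv ℝ x₁ (h : Matrix (Fin 2) (Fin 2) ℝ) ((h : Matrix (Fin 2) (Fin 2) ℝ) * y₂ g) +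
        (x₁ h * x₂ h - x₂ h * x₁ h),
      fderiv ℝ y₂ (g : Matrix (Fin 2) (Fin 2) ℝ) ((g : Matrix (Fin 2) (Fin 2) ℝ) * x₁ h) -
        fderiv ℝ y₁ (g : Matrix (Fin 2) (Fin 2) ℝ) ((g : Matrix (Fin 2) (Fin 2) ℝ) * x₂ h) +
        (y₁ g * y₂ g - y₂ g * y₁ g)) =
    (fderiv ℝ x₂ (h : Matrix (Fin 2) (Fin 2) ℝ) ((h : Matrix (Fin 2) (Fin 2) ℝ) * y₁ g) -
        fderiv ℝ x₁ (h : Matrix (Fin 2) (Fin 2) ℝ) ((h : Matrix (Fin 2) (Fin 2) ℝ) * y₂ g),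
      fderiv ℝ y₂ (g : Matrix (Fin 2) (Fin 2) ℝ) ((g : Matrix (Fin 2) (Fin 2) ℝ) * x₁ h) -
        fderiv ℝ y₁ (g : Matrix (Fin 2) (Fin 2) ℝ) ((g : Matrix (Fin 2) (Fin 2) ℝ) * x₂ h)) := by
  have hdet_g : (g : Matrix (Fin 2) (Fin 2) ℝ).det = 1 := g.property
  have hdet_h : (h : Matrix (Fin 2) (Fin 2) ℝ).det = 1 := h.property
  have comm : ∀ (k : SL2R), (k : Matrix (Fin 2) (Fin 2) ℝ).det = 1 →
      ∀ a : Matrix (Fin 2) (Fin 2) ℝ,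
      (k : Matrix (Fin 2) (Fin 2) ℝ) * a * (k : Matrix (Fin 2) (Fin 2) ℝ)⁻¹ = a →
      (k : Matrix (Fin 2) (Fin 2) ℝ) * a = a * (k : Matrix (Fin 2) (Fin 2) ℝ) := by
    intro k hdet a hAd
    have hinv : (k : Matrix (Fin 2) (Fin 2) ℝ)⁻¹ * (k : Matrix (Fin 2) (Fin 2) ℝ) = 1 :=
      Matrix.nonsing_inv_mul _ (by rw [hdet]; norm_num)
    calc (k : Matrix (Fin 2) (Fin 2) ℝ) * a
        = (k : Matrix (Fin 2) (Fin 2) ℝ) * a *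
            ((k : Matrix (Fin 2) (Fin 2) ℝ)⁻¹ * (k : Matrix (Fin 2) (Fin 2) ℝ)) := by
          rw [hinv, mul_one]
      _ = ((k : Matrix (Fin 2) (Fin 2) ℝ) * a * (k : Matrix (Fin 2) (Fin 2) ℝ)⁻¹) *
            (k : Matrix (Fin 2) (Fin 2) ℝ) := by simp only [Matrix.mul_assoc]
      _ = a * (k : Matrix (Fin 2) (Fin 2) ℝ) := by rw [hAd]
  have hx : x₁ h * x₂ h = x₂ h * x₁ h :=
    key_comm (h : Matrix (Fin 2) (Fin 2) ℝ) (x₁ h) (x₂ h) hdet_h hreg_h.1 hreg_h.2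
      (hx₁ h).1 (hx₂ h).1 (comm h hdet_h _ (hx₁ h).2) (comm h hdet_h _ (hx₂ h).2)
  have hy : y₁ g * y₂ g = y₂ g * y₁ g :=
    key_comm (g : Matrix (Fin 2) (Fin 2) ℝ) (y₁ g) (y₂ g) hdet_g hreg_g.1 hreg_g.2
      (hy₁ g).1 (hy₂ g).1 (comm g hdet_g _ (hy₁ g).2) (comm g hdet_g _ (hy₂ g).2)
  rw [hx, hy, sub_self, sub_self, add_zero, add_zero]
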